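/- Let $\lambda \in (0,1)$, set $Q := 1-\lambda^2$, and let $z \in [0,1]$. Define $p_\ell := 2^{-\ell}(1-Q)^{\ell-1}\, {}_2F_1(\ell/2, (\ell+1)/2; 2; Q)$ for $\ell \geq 1$. Then $\sum_{\ell \geq 1} p_\ell z^\ell = \frac{z}{1-\lambda^2}\left(1 - \frac{\lambda^2 z}{2} - \frac{\lambda}{2}\sqrt{\lambda^2 z^2 - 4z + 4}\right)$. -/

import Mathlib

open Real

noncomputable def poch (a : ℝ) (n : ℕ) : ℝ := (ascPochhammer ℝ n).eval a

/-- The Gauss hypergeometric series `₂F₁(a,b;c;x)`. -/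
noncomputable def hyp2F1 (a b c x : ℝ) : ℝ :=
  ∑' n : ℕ, poch a n * poch b n / (poch c n * (n.factorial : ℝ)) * x ^ n

lemma poch_succ (a : ℝ) (n : ℕ) : poch a (n+1) = poch a n * (a + n) :=
  ascPochhammer_succ_eval n a

lemma poch_dup (a : ℝ) (n : ℕ) :
    poch a n * poch (a + 1/2) n = poch (2*a) (2*n) / 4^n := by
  induction n with
  | zero => simp [poch]
  | succ n ih =>
    rw [poch_succ, poch_succ, show 2*(n+1) = (2*n)+1+1 from by ring, poch_succ, poch_succ]
    push_cast
    linear_combination (a + (n:ℝ)) * (a + 1/2 + (n:ℝ)) * ih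

lemma poch_two (n : ℕ) : poch 2 n = ((n+1).factorial : ℝ) := by
  have h := factorial_mul_ascPochhammer ℝ 1 n
  norm_num at h
  rw [poch, h, Nat.add_comm]

lemma poch_nat (ℓ m : ℕ) : ((ℓ.factorial : ℝ)) * poch ((ℓ:ℝ)+1) m = ((ℓ+m).factorial : ℝ) :=
  factorial_mul_ascPochhammer ℝ ℓ m

lemma catalan_real (n : ℕ) :
    (catalan n : ℝ) * (n.factorial * (n+1).factorial) = ((2*n).factorial : ℝ) := by
  have h : catalan n * (n.factorial * (n+1).factorial) = (2*n).factorial := by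
    have h1 := succ_mul_catalan_eq_centralBinom n
    have h2 : (2*n).choose n * n.factorial * (2*n - n).factorial = (2*n).factorial :=
      Nat.choose_mul_factorial_mul_factorial (by omega)
    have h3 : 2*n - n = n := by omega
    rw [h3] at h2
    calc catalan n * (n.factorial * (n+1).factorial)
        = ((n+1) * catalan n) * (n.factorial * n.factorial) := by
          rw [Nat.factorial_succ]; ring
      _ = n.centralBinom * (n.factorial * n.factorial) := by rw [h1]
      _ = (2*n).factorial := by rw [Nat.centralBinom]; rw [← h2]; ring
  exact_mod_cast congrArg (Nat.cast : ℕ → ℝ) h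


lemma sum_range_antidiagonal_le (t : ℕ → ℝ) (ht : ∀ i, 0 ≤ t i) (N : ℕ) :
    ∑ n ∈ Finset.range N, ∑ p ∈ Finset.HasAntidiagonal.antidiagonal n, t p.1 * t p.2 ≤
      (∑ i ∈ Finset.range N, t i)^2 := by
  classical
  have hdisj : (↑(Finset.range N) : Set ℕ).PairwiseDisjoint
      (fun n => (Finset.HasAntidiagonal.antidiagonal n : Finset (ℕ × ℕ))) := by
    intro m _ n _ hmn
    simp only [Function.onFun]
    rw [Finset.disjoint_left]
    intro p hp hq
    rw [Finset.HasAntidiagonal.mem_antidiagonal] at hp hq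
    exact hmn (hp ▸ hq)
  rw [← Finset.sum_biUnion hdisj]
  have hsub : (Finset.range N).biUnion (fun n => Finset.HasAntidiagonal.antidiagonal n) ⊆
      Finset.range N ×ˢ Finset.range N := by
    intro p hp
    simp only [Finset.mem_biUnion, Finset.mem_range] at hp
    obtain ⟨n, hn, hpn⟩ := hp
    rw [Finset.HasAntidiagonal.mem_antidiagonal] at hpn
    simp only [Finset.mem_product, Finset.mem_range]
    omega
  refine (Finset.sum_le_sum_of_subset_of_nonneg hsub
    (fun p _ _ => mul_nonneg (ht p.1) (ht p.2))).trans ?_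
  rw [sq, Finset.sum_mul_sum, ← Finset.sum_product']

lemma catalan_partial_le {w r : ℝ} (hw : 0 ≤ w) (hr0 : 0 ≤ r) (hr : 1 + w * r^2 = r) (N : ℕ) :
    ∑ n ∈ Finset.range N, (catalan n : ℝ) * w^n ≤ r := by
  induction N with
  | zero => simpa using hr0
  | succ N ih =>
    rw [Finset.sum_range_succ']
    have key : ∀ i, (catalan (i+1) : ℝ) * w^(i+1) =
        w * ∑ p ∈ Finset.HasAntidiagonal.antidiagonal i,
          ((catalan p.1 : ℝ) * w^p.1) * ((catalan p.2 : ℝ) * w^p.2) := by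
      intro i
      rw [catalan_succ']
      push_cast
      rw [Finset.sum_mul, Finset.mul_sum]
      refine Finset.sum_congr rfl fun p hp => ?_
      rw [Finset.HasAntidiagonal.mem_antidiagonal] at hp
      rw [← hp]
      ring
    have hsumnn : 0 ≤ ∑ i ∈ Finset.range N, (catalan i : ℝ) * w^i := by positivity
    calc (∑ i ∈ Finset.range N, (catalan (i+1):ℝ) * w^(i+1)) + (catalan 0 : ℝ) * w^0
        = 1 + w * ∑ i ∈ Finset.range N, ∑ p ∈ Finset.HasAntidiagonal.antidiagonal i,
            ((catalan p.1:ℝ)*w^p.1) * ((catalan p.2:ℝ)*w^p.2) := by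
          simp only [key]
          rw [← Finset.mul_sum]
          simp only [catalan_zero, Nat.cast_one, pow_zero, mul_one]
          ring
      _ ≤ 1 + w * (∑ i ∈ Finset.range N, (catalan i : ℝ)*w^i)^2 := by
          gcongr
          exact sum_range_antidiagonal_le (fun i => (catalan i : ℝ) * w^i)
            (fun i => by positivity) N
      _ ≤ 1 + w * r^2 := by gcongr
      _ = r := hr

lemma catalan_hasSum {w : ℝ} (hw0 : 0 < w) (hw1 : 4*w < 1) :
    HasSum (fun n => (catalan n : ℝ) * w ^ n) ((1 - Real.sqrt (1-4*w)) / (2*w)) := by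
  have h4 : (0:ℝ) ≤ 1 - 4*w := by linarith
  set s := Real.sqrt (1-4*w) with hsdef
  have hs2 : s^2 = 1-4*w := Real.sq_sqrt h4
  have hs0 : 0 < s := Real.sqrt_pos.2 (by linarith)
  have hs1 : s ≤ 1 := by nlinarith [hs2]
  set r := (1-s)/(2*w) with hrdef
  have hr0 : 0 ≤ r := div_nonneg (by linarith) (by linarith)
  have hfix : 1 + w*r^2 = r := by
    rw [hrdef]
    field_simp
    linear_combination hs2
  have hsum : Summable (fun n => (catalan n : ℝ) * w^n) :=
    summable_of_sum_range_le (fun n => by positivity)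
      (catalan_partial_le hw0.le hr0 hfix)
  set c := ∑' n, (catalan n : ℝ) * w^n with hcdef
  have hc_le : c ≤ r :=
    Real.tsum_le_of_sum_range_le (fun n => by positivity)
      (catalan_partial_le hw0.le hr0 hfix)
  -- Cauchy product
  have hnormeq : (fun n => ‖(catalan n : ℝ) * w^n‖) = fun n => (catalan n : ℝ) * w^n :=
    funext fun n => Real.norm_of_nonneg (by positivity)
  have hnorm : Summable (fun n => ‖(catalan n : ℝ) * w^n‖) := by rw [hnormeq]; exact hsum
  have hcauchy := tsum_mul_tsum_eq_tsum_sum_range_of_summable_norm hnorm hnorm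
  have hinner : ∀ n : ℕ, (∑ i ∈ Finset.range (n+1),
      ((catalan i : ℝ) * w^i) * ((catalan (n-i) : ℝ) * w^(n-i))) = (catalan (n+1) : ℝ) * w^n := by
    intro n
    have hnat : catalan (n+1) = ∑ i ∈ Finset.range (n+1), catalan i * catalan (n-i) := by
      rw [catalan_succ]
      exact Fin.sum_univ_eq_sum_range (fun i => catalan i * catalan (n-i)) (n+1)
    rw [hnat]
    push_cast
    rw [Finset.sum_mul]
    refine Finset.sum_congr rfl fun i hi => ?_
    rw [Finset.mem_range] at hi
    have : w^i * w^(n-i) = w^n := by rw [← pow_add]; congr 1; omega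
    calc ((catalan i : ℝ) * w^i) * ((catalan (n-i) : ℝ) * w^(n-i))
        = (catalan i : ℝ) * (catalan (n-i) : ℝ) * (w^i * w^(n-i)) := by ring
      _ = (catalan i : ℝ) * (catalan (n-i) : ℝ) * w^n := by rw [this]
  rw [tsum_congr hinner] at hcauchy
  -- hcauchy : c * c = ∑' n, catalan (n+1) * w^n
  have hshift : c = 1 + w * (c * c) := by
    have h0 := hsum.tsum_eq_zero_add
    rw [hcdef, hcauchy, ← tsum_mul_left, h0]
    simp only [catalan_zero, Nat.cast_one, pow_zero, mul_one]
    congr 1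
    exact tsum_congr fun b => by ring
  have hzero : (c*(2*w) - (1-s)) * (c*(2*w) - (1+s)) = 0 := by
    linear_combination (-1 : ℝ)*hs2 - 4*w*hshift
  have h2w : (0:ℝ) < 2*w := by linarith
  have hc_eq : c = r := by
    rcases mul_eq_zero.1 hzero with h | h
    · rw [hrdef, eq_div_iff (ne_of_gt h2w)]
      linarith
    · exfalso
      rw [hrdef] at hc_le
      have hle : c * (2*w) ≤ 1 - s := (le_div_iff₀ h2w).1 hc_le
      linarith
  rw [← hc_eq]
  exact hsum.hasSum


set_option maxHeartbeats 1600000 in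
/-- Theorem 3: the probability-generating function of the total progeny law
`p_ℓ = 2^{-ℓ}(1-Q)^{ℓ-1} ₂F₁(ℓ/2,(ℓ+1)/2;2;Q)` with `Q = 1-λ²` equals `H_{1/2}(z)`. -/
theorem progeny_pgf (lam z : ℝ) (hl0 : 0 < lam) (hl1 : lam < 1) (hz0 : 0 ≤ z) (hz1 : z ≤ 1) :
    (∑' ℓ : ℕ, (1 / 2 : ℝ) ^ (ℓ + 1) * (1 - (1 - lam ^ 2)) ^ ℓ *
        hyp2F1 (((ℓ : ℝ) + 1) / 2) (((ℓ : ℝ) + 2) / 2) 2 (1 - lam ^ 2) * z ^ (ℓ + 1)) =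
      z / (1 - lam ^ 2) *
        (1 - lam ^ 2 * z / 2 - lam / 2 * Real.sqrt (lam ^ 2 * z ^ 2 - 4 * z + 4)) := by
  have hQ0 : (0:ℝ) < 1 - lam^2 := by nlinarith
  have hQ1 : 1 - lam^2 < 1 := by nlinarith
  set Q : ℝ := 1 - lam^2 with hQdef
  set x : ℝ := lam^2*z/2 with hxdef
  have hx0 : 0 ≤ x := by rw [hxdef]; positivity
  have hx12 : x ≤ lam^2/2 := by rw [hxdef]; nlinarith
  have hx1 : x < 1/2 := by nlinarith
  have hx1' : ‖x‖ < 1 := by rw [Real.norm_eq_abs, abs_of_nonneg hx0]; linarith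
  have h1x : 0 < 1 - x := by linarith
  have hsq : Real.sqrt Q < 1 - x := by
    have h1 : Real.sqrt Q < 1 - lam^2/2 := by
      rw [Real.sqrt_lt' (by nlinarith)]
      rw [hQdef]; nlinarith
    linarith
  have hsqQ : Real.sqrt Q ^ 2 = Q := Real.sq_sqrt hQ0.le
  set w : ℝ := Q/(4*(1-x)^2) with hwdef
  have hw0 : 0 < w := by rw [hwdef]; positivity
  have hxne : (1:ℝ) - x ≠ 0 := h1x.ne'
  have h4w : 4*w = Q/(1-x)^2 := by
    rw [hwdef]
    field_simp
  have hw1 : 4*w < 1 := by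
    rw [h4w, div_lt_one (by positivity)]
    nlinarith [hsq, hsqQ, Real.sqrt_nonneg Q]
  set a : ℕ → ℕ → ℝ := fun n ℓ =>
    (z/2) * (((ℓ+2*n).choose (2*n) : ℕ) : ℝ) * (catalan n : ℝ) * (Q/4)^n * x^ℓ with hadef
  -- pointwise identity
  have hpoint : ∀ ℓ n : ℕ,
      (1/2:ℝ)^(ℓ+1) * (lam^2)^ℓ * z^(ℓ+1) *
        (poch (((ℓ:ℝ)+1)/2) n * poch (((ℓ:ℝ)+2)/2) n / (poch 2 n * (n.factorial:ℝ)) * Q^n)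
      = a n ℓ := by
    intro ℓ n
    have hdup := poch_dup (((ℓ:ℝ)+1)/2) n
    rw [show 2*(((ℓ:ℝ)+1)/2) = (ℓ:ℝ)+1 by ring,
        show ((ℓ:ℝ)+1)/2 + 1/2 = ((ℓ:ℝ)+2)/2 by ring] at hdup
    rw [hdup, poch_two]
    have hfacn : ((ℓ.factorial : ℕ) : ℝ) ≠ 0 := by exact_mod_cast ℓ.factorial_ne_zero
    have hfac : poch ((ℓ:ℝ)+1) (2*n) = ((ℓ+2*n).factorial : ℝ) / (ℓ.factorial : ℝ) := by
      rw [eq_div_iff hfacn, mul_comm]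
      exact poch_nat ℓ (2*n)
    rw [hfac]
    have hch : (((ℓ+2*n).choose (2*n) : ℕ) : ℝ)
        = ((ℓ+2*n).factorial : ℝ) / (((2*n).factorial : ℝ) * (ℓ.factorial : ℝ)) := by
      rw [eq_div_iff (by positivity)]
      have h2 : (ℓ+2*n).choose (2*n) * (2*n).factorial * ((ℓ+2*n) - 2*n).factorial
          = (ℓ+2*n).factorial := Nat.choose_mul_factorial_mul_factorial (by omega)
      have h3 : (ℓ+2*n) - 2*n = ℓ := by omega
      rw [h3] at h2
      have h4 : (ℓ+2*n).choose (2*n) * ((2*n).factorial * ℓ.factorial)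
          = (ℓ+2*n).factorial := by rw [← h2]; ring
      exact_mod_cast h4
    have hcat : (catalan n : ℝ)
        = ((2*n).factorial : ℝ) / ((n.factorial : ℝ) * ((n+1).factorial : ℝ)) := by
      rw [eq_div_iff (by positivity)]
      exact_mod_cast catalan_real n
    simp only [hadef]
    rw [hch, hcat]
    have e1 : ((2*n).factorial : ℝ) ≠ 0 := by positivity
    have e2 : ((n).factorial : ℝ) ≠ 0 := by positivity
    have e3 : (((n+1)).factorial : ℝ) ≠ 0 := by positivity
    rw [hxdef]
    field_simp
    have h4n : (1/4:ℝ)^n * 4^n = 1 := by rw [← mul_pow]; norm_num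
    have h4q : ((1:ℝ)/4 + lam^2*(-1/4))^n = (1/4)^n*(1-lam^2)^n := by rw [← mul_pow]; congr 1; ring
    linear_combination (-(lam ^ (ℓ * 2) * z * z ^ ℓ * Q ^ n * (1 / 2) ^ ℓ)) * h4n
      + (-(lam ^ (ℓ * 2) * z * z ^ ℓ * (1 / 2) ^ ℓ * 4 ^ n)) * h4q
  -- termwise rewriting of the statement summand
  have hlamQ : 1 - Q = lam^2 := by rw [hQdef]; ring
  have hterm : ∀ ℓ : ℕ,
      (1/2:ℝ)^(ℓ+1) * (1 - Q)^ℓ *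
        hyp2F1 (((ℓ:ℝ)+1)/2) (((ℓ:ℝ)+2)/2) 2 Q * z^(ℓ+1) = ∑' n, a n ℓ := by
    intro ℓ
    rw [hlamQ]
    unfold hyp2F1
    rw [mul_right_comm, ← tsum_mul_left]
    exact tsum_congr fun n => hpoint ℓ n
  -- row sums
  have hrow : ∀ n : ℕ, HasSum (fun ℓ => a n ℓ)
      ((z/2) * (catalan n : ℝ) * (Q/4)^n * (1/(1-x)^(2*n+1))) := by
    intro n
    have h := (hasSum_choose_mul_geometric_of_norm_lt_one (2*n) hx1').mul_left
      ((z/2) * (catalan n : ℝ) * (Q/4)^n)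
    have hfe : (fun ℓ => (z/2) * (catalan n : ℝ) * (Q/4)^n *
        ((((ℓ+2*n).choose (2*n) : ℕ) : ℝ) * x^ℓ)) = fun ℓ => a n ℓ := by
      funext ℓ
      simp only [hadef]
      ring
    rw [← hfe]
    exact h
  have hrowval : ∀ n : ℕ, (z/2) * (catalan n : ℝ) * (Q/4)^n * (1/(1-x)^(2*n+1))
      = (z/(2*(1-x))) * ((catalan n : ℝ) * w^n) := by
    intro n
    have hp : (1-x)^(2*n+1) = ((1-x)^2)^n * (1-x) := by
      rw [pow_succ, pow_mul]
    have e5 : ((1-x)^2)^n ≠ 0 := by positivity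
    rw [hp, hwdef, div_pow, div_pow, mul_pow]
    field_simp
  -- product summability
  have hann : ∀ p : ℕ × ℕ, 0 ≤ Function.uncurry a p := by
    intro p
    simp only [Function.uncurry, hadef]
    have hQ0' : (0:ℝ) < Q := hQ0
    positivity
  have hcat := catalan_hasSum hw0 hw1
  have hprod : Summable (Function.uncurry a) := by
    rw [summable_prod_of_nonneg hann]
    constructor
    · exact fun n => (hrow n).summable
    · refine Summable.congr (hcat.summable.mul_left (z/(2*(1-x)))) fun n => ?_
      simp only [Function.uncurry_apply_pair]
      rw [(hrow n).tsum_eq]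
      exact (hrowval n).symm
  -- main computation
  have hS : (0:ℝ) ≤ lam^2*z^2 - 4*z + 4 := by nlinarith
  calc (∑' ℓ : ℕ, (1/2:ℝ)^(ℓ+1) * (1 - Q)^ℓ *
        hyp2F1 (((ℓ:ℝ)+1)/2) (((ℓ:ℝ)+2)/2) 2 Q * z^(ℓ+1))
      = ∑' ℓ : ℕ, ∑' n : ℕ, a n ℓ := tsum_congr hterm
    _ = ∑' n : ℕ, ∑' ℓ : ℕ, a n ℓ :=
        Summable.tsum_comm' hprod (fun n => (hrow n).summable)
          (fun ℓ => hprod.prod_symm.prod_factor ℓ)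
    _ = ∑' n : ℕ, (z/(2*(1-x))) * ((catalan n : ℝ) * w^n) :=
        tsum_congr fun n => by rw [(hrow n).tsum_eq]; exact hrowval n
    _ = (z/(2*(1-x))) * ((1 - Real.sqrt (1-4*w))/(2*w)) := by
        rw [tsum_mul_left, hcat.tsum_eq]
    _ = z / Q * (1 - lam^2*z/2 - lam/2 * Real.sqrt (lam^2*z^2 - 4*z + 4)) := by
        have h1x' : (0:ℝ) < 1 - lam^2*z/2 := h1x
        have hQ0' : (0:ℝ) < 1 - lam^2 := hQ0
        have hmul : (1 - 4*w) * (1-x)^2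
            = (lam/2 * Real.sqrt (lam^2*z^2-4*z+4))^2 := by
          have hmul1 : (1 - 4*w) * (1-x)^2 = (1-x)^2 - Q := by
            rw [hwdef]
            field_simp
          have hmul2 : (1-x)^2 - Q = (lam/2 * Real.sqrt (lam^2*z^2-4*z+4))^2 := by
            rw [mul_pow, Real.sq_sqrt hS, hQdef, hxdef]
            ring
          rw [hmul1, hmul2]
        have h1 : 1 - 4*w = (lam/2 * Real.sqrt (lam^2*z^2-4*z+4) / (1-x))^2 := by
          rw [div_pow, eq_div_iff (pow_ne_zero 2 hxne)]
          exact hmul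
        have hkey : Real.sqrt (1 - 4*w)
            = lam/2 * Real.sqrt (lam^2*z^2-4*z+4) / (1-x) := by
          rw [h1, Real.sqrt_sq (div_nonneg (by positivity) h1x.le)]
        show (z/(2*(1-x))) * ((1 - Real.sqrt (1-4*w))/(2*w))
            = z / Q * (1 - x - lam/2 * Real.sqrt (lam^2*z^2 - 4*z + 4))
        rw [hkey, hwdef]
        have hQne : Q ≠ 0 := hQ0.ne'
        field_simp [hxne, hQne]
        ring
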